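/- Let f : ℝⁿ → ℝ be a polynomial of degree d ≥ 2 and let c ∈ ℝ. Suppose (x_k) is a sequence in ℝⁿ such that ‖x_k‖ → +∞, x_k/‖x_k‖ → u for some unit vector u ∈ S^{n-1}, f(x_k) → c, and ‖x_k‖·‖∇f(x_k)‖ → 0 (failure of the Malgrange condition at c along (x_k)). Then ∇f_d(u) = 0 and f_{d-1}(u) = 0. -/

import Mathlib

open MvPolynomial Filter Topology

section Aux

lemma aux_key {m : ℕ} (hm : 1 ≤ m) {t : ℕ → ℝ} (ht : Tendsto t atTop atTop)
    {S : ℕ → ℝ} {L : ℝ} (hS : Tendsto S atTop (𝓝 L))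
    {a : ℕ → ℕ → ℝ} {α : ℕ → ℝ}
    (ha : ∀ j ∈ Finset.range (m + 1), Tendsto (a j) atTop (𝓝 (α j)))
    (hsum : ∀ᶠ k in atTop, S k = ∑ j ∈ Finset.range (m + 1), t k ^ j * a j k) :
    α m = 0 := by
  have htinv : Tendsto (fun k => (t k)⁻¹) atTop (𝓝 0) := ht.inv_tendsto_atTop
  have h1 : Tendsto (fun k => ∑ j ∈ Finset.range (m + 1), ((t k)⁻¹) ^ (m - j) * a j k)
      atTop (𝓝 (∑ j ∈ Finset.range (m + 1), (0 : ℝ) ^ (m - j) * α j)) :=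
    tendsto_finset_sum _ fun j hj => ((htinv.pow (m - j)).mul (ha j hj))
  have hval : (∑ j ∈ Finset.range (m + 1), (0 : ℝ) ^ (m - j) * α j) = α m := by
    rw [Finset.sum_eq_single m]
    · simp
    · intro j hj hjm
      rw [zero_pow (Nat.sub_ne_zero_of_lt (lt_of_le_of_ne (Nat.lt_succ_iff.mp
        (Finset.mem_range.mp hj)) hjm)), zero_mul]
    · simp
  rw [hval] at h1
  have h2 : Tendsto (fun k => (t k ^ m)⁻¹ * S k) atTop (𝓝 0) := by
    have hpow : Tendsto (fun k => t k ^ m) atTop atTop :=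
      (tendsto_pow_atTop (by omega : m ≠ 0)).comp ht
    simpa using hpow.inv_tendsto_atTop.mul hS
  have heq : (fun k => ∑ j ∈ Finset.range (m + 1), ((t k)⁻¹) ^ (m - j) * a j k)
      =ᶠ[atTop] (fun k => (t k ^ m)⁻¹ * S k) := by
    filter_upwards [hsum, ht.eventually_gt_atTop 0] with k hk hk0
    rw [hk, Finset.mul_sum]
    refine Finset.sum_congr rfl fun j hj => ?_
    have hj' : j ≤ m := Nat.lt_succ_iff.mp (Finset.mem_range.mp hj)
    rw [inv_pow, ← mul_assoc]
    congr 1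
    have h0 : t k ≠ 0 := hk0.ne'
    field_simp
    rw [← pow_add, Nat.sub_add_cancel hj']
  exact tendsto_nhds_unique (h1.congr' heq) h2

lemma aux_weight {n : ℕ} (s : Fin n →₀ ℕ) : (Finsupp.weight 1) s = ∑ i, s i := by
  rw [Finsupp.weight_apply, Finsupp.sum_fintype]
  · simp
  · simp

lemma aux_eval_smul {n : ℕ} {p : MvPolynomial (Fin n) ℝ} {m : ℕ}
    (hp : p.IsHomogeneous m) (t : ℝ) (y : Fin n → ℝ) :
    eval (t • y) p = t ^ m * eval y p := by
  rw [eval_eq', eval_eq', Finset.mul_sum]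
  refine Finset.sum_congr rfl fun s hs => ?_
  have hm : ∑ i, s i = m := by
    rw [← aux_weight]; exact hp (mem_support_iff.mp hs)
  rw [← hm]
  simp only [Pi.smul_apply, smul_eq_mul, mul_pow]
  rw [Finset.prod_mul_distrib, Finset.prod_pow_eq_pow_sum]
  ring

lemma aux_euler_monomial {n : ℕ} (s : Fin n →₀ ℕ) (a : ℝ) :
    ∑ i : Fin n, X i * pderiv i (monomial s a) = monomial s (((∑ i, s i : ℕ) : ℝ) * a) := by
  have key : ∀ i : Fin n, X i * pderiv i (monomial s a) = monomial s ((s i : ℝ) * a) := by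
    intro i
    rw [pderiv_monomial]
    rcases Nat.eq_zero_or_pos (s i) with h | h
    · simp [h]
    · rw [X, monomial_mul, one_mul]
      congr 1
      · rw [add_tsub_cancel_of_le (Finsupp.single_le_iff.mpr h)]
      · ring
  rw [Finset.sum_congr rfl fun i _ => key i, ← map_sum (monomial s) _ Finset.univ]
  congr 1
  rw [← Finset.sum_mul, Nat.cast_sum]

lemma aux_euler {n : ℕ} {p : MvPolynomial (Fin n) ℝ} {m : ℕ} (hp : p.IsHomogeneous m)
    (w : Fin n → ℝ) :
    ∑ i, w i * eval w (pderiv i p) = m * eval w p := by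
  conv_lhs => rw [← p.support_sum_monomial_coeff]
  conv_rhs => rw [← p.support_sum_monomial_coeff]
  simp only [map_sum, Finset.mul_sum]
  rw [Finset.sum_comm]
  refine Finset.sum_congr rfl fun s hs => ?_
  have hm : ((∑ i, s i : ℕ) : ℝ) = m := by
    rw [show ∑ i, s i = m from (aux_weight s ▸ hp (mem_support_iff.mp hs))]
  calc ∑ i, w i * eval w (pderiv i (monomial s (coeff s p)))
      = eval w (∑ i : Fin n, X i * pderiv i (monomial s (coeff s p))) := by
        simp [map_sum]
    _ = m * eval w (monomial s (coeff s p)) := by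
        rw [aux_euler_monomial, eval_monomial, eval_monomial, hm]; ring

lemma aux_degree {n : ℕ} (s : Fin n →₀ ℕ) : s.degree = ∑ i, s i := by
  unfold Finsupp.degree
  exact Finset.sum_subset (Finset.subset_univ _)
    (fun j _ h => Finsupp.notMem_support_iff.mp h)

lemma aux_degree_add {n : ℕ} (a b : Fin n →₀ ℕ) :
    (a + b).degree = a.degree + b.degree := by
  simp [aux_degree, Finsupp.add_apply, Finset.sum_add_distrib]

lemma aux_pderiv_homog {n : ℕ} {p : MvPolynomial (Fin n) ℝ} {m : ℕ}
    (hp : p.IsHomogeneous m) (i : Fin n) : (pderiv i p).IsHomogeneous (m - 1) := by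
  conv_lhs => rw [← p.support_sum_monomial_coeff]
  rw [map_sum]
  refine IsHomogeneous.sum _ _ _ fun s hs => ?_
  rw [pderiv_monomial]
  rcases Nat.eq_zero_or_pos (s i) with h | h
  · simp only [h, Nat.cast_zero, mul_zero, map_zero]
    exact isHomogeneous_zero _ _ _
  · refine isHomogeneous_monomial _ ?_
    have hdeg : s.degree = m := by
      rw [Finsupp.degree_eq_weight_one]
      exact hp (mem_support_iff.mp hs)
    have hc : (s - Finsupp.single i 1) + Finsupp.single i 1 = s :=
      tsub_add_cancel_of_le (Finsupp.single_le_iff.mpr h)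
    have h1 : (Finsupp.single i 1 : Fin n →₀ ℕ).degree = 1 := by
      simp [aux_degree, Finsupp.single_apply]
    have h2 := aux_degree_add (s - Finsupp.single i 1) (Finsupp.single i 1)
    rw [hc, h1] at h2
    omega

lemma aux_coord_le {n : ℕ} (z : EuclideanSpace ℝ (Fin n)) (i : Fin n) : |z i| ≤ ‖z‖ := by
  rw [EuclideanSpace.norm_eq]
  calc |z i| = Real.sqrt (‖z i‖ ^ 2) := by rw [Real.sqrt_sq_eq_abs, Real.norm_eq_abs, abs_abs]
    _ ≤ _ := Real.sqrt_le_sqrt (Finset.single_le_sum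
        (fun j _ => sq_nonneg ‖z j‖) (Finset.mem_univ i))

end Aux

/-- Evaluation of a multivariate polynomial at a point of Euclidean space. -/
noncomputable def pevalE {n : ℕ} (f : MvPolynomial (Fin n) ℝ) (x : EuclideanSpace ℝ (Fin n)) : ℝ :=
  eval (EuclideanSpace.equiv (Fin n) ℝ x) f

/-- The gradient vector (∂f/∂x_1, …, ∂f/∂x_n) of a polynomial, at a point of Euclidean space. -/
noncomputable def pgrad {n : ℕ} (f : MvPolynomial (Fin n) ℝ) (x : EuclideanSpace ℝ (Fin n)) :
    EuclideanSpace ℝ (Fin n) :=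
  (EuclideanSpace.equiv (Fin n) ℝ).symm
    (fun i => eval (EuclideanSpace.equiv (Fin n) ℝ x) (pderiv i f))

/-- If `f : ℝⁿ → ℝ` is a polynomial of degree `d ≥ 2`, `c ∈ ℝ`, and `(x_k)` is a sequence with
`‖x_k‖ → ∞`, `x_k/‖x_k‖ → u` (`u` a unit vector), `f(x_k) → c` and `‖x_k‖·‖∇f(x_k)‖ → 0`
(failure of the Malgrange condition at `c` along `(x_k)`), then `∇f_d(u) = 0` and
`f_{d-1}(u) = 0`. -/
theorem statement1 {n : ℕ} (f : MvPolynomial (Fin n) ℝ) (d : ℕ) (hd : 2 ≤ d)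
    (hdeg : f.totalDegree = d) (c : ℝ)
    (x : ℕ → EuclideanSpace ℝ (Fin n)) (u : EuclideanSpace ℝ (Fin n)) (hu : ‖u‖ = 1)
    (hnorm : Tendsto (fun k => ‖x k‖) atTop atTop)
    (hdir : Tendsto (fun k => (‖x k‖)⁻¹ • x k) atTop (𝓝 u))
    (hval : Tendsto (fun k => pevalE f (x k)) atTop (𝓝 c))
    (hmal : Tendsto (fun k => ‖x k‖ * ‖pgrad f (x k)‖) atTop (𝓝 0)) :
    pgrad (homogeneousComponent d f) u = 0 ∧
      pevalE (homogeneousComponent (d - 1) f) u = 0 := by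
  set E := EuclideanSpace.equiv (Fin n) ℝ with hE
  set F : ℕ → MvPolynomial (Fin n) ℝ := fun j => homogeneousComponent j f with hF
  have hFj : ∀ j, (F j).IsHomogeneous j := fun j => homogeneousComponent_isHomogeneous j f
  have hfd : f = ∑ j ∈ Finset.range (d + 1), F j := by
    conv_lhs => rw [← f.sum_homogeneousComponent]
    rw [hdeg]
  set v : ℕ → EuclideanSpace ℝ (Fin n) := fun k => (‖x k‖)⁻¹ • x k with hv
  have ht0 : ∀ᶠ k in atTop, 0 < ‖x k‖ := hnorm.eventually_gt_atTop 0
  have hxk : ∀ᶠ k in atTop, x k = ‖x k‖ • v k :=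
    ht0.mono fun k hk => (smul_inv_smul₀ hk.ne' (x k)).symm
  have hcont : ∀ q : MvPolynomial (Fin n) ℝ,
      Tendsto (fun k => eval (E (v k)) q) atTop (𝓝 (eval (E u) q)) := fun q =>
    (((MvPolynomial.continuous_eval q).comp E.continuous).tendsto u).comp hdir
  have hEsmul : ∀ (s : ℝ) (y : EuclideanSpace ℝ (Fin n)), E (s • y) = s • (E y) :=
    fun s y => map_smul E s y
  constructor
  · -- gradient of top component vanishes at u
    have hcomp : ∀ i : Fin n, eval (E u) (pderiv i (F d)) = 0 := by
      intro i
      refine aux_key (m := d) (by omega) hnorm (L := 0)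
        (S := fun k => ‖x k‖ * pgrad f (x k) i)
        (a := fun j k => eval (E (v k)) (pderiv i (F j)))
        (α := fun j => eval (E u) (pderiv i (F j))) ?_ (fun j _ => hcont _) ?_
      · refine squeeze_zero_norm (fun k => ?_) hmal
        rw [norm_mul, Real.norm_eq_abs, Real.norm_eq_abs, abs_norm]
        exact mul_le_mul_of_nonneg_left (aux_coord_le _ i) (norm_nonneg _)
      · filter_upwards [hxk, ht0] with k hk hk0
        have hEx : E (x k) = ‖x k‖ • E (v k) := by
          conv_lhs => rw [hk, map_smul]
        have hpg : pgrad f (x k) i = eval (E (x k)) (pderiv i f) := rfl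
        rw [hpg]
        conv_lhs => rw [hfd]
        rw [map_sum, map_sum, Finset.mul_sum]
        refine Finset.sum_congr rfl fun j hj => ?_
        rcases Nat.eq_zero_or_pos j with rfl | hj1
        · have : pderiv i (F 0) = 0 := by
            rw [hF]; simp only [homogeneousComponent_zero]; exact pderiv_C
          simp [this]
        · have hpd : (pderiv i (F j)).IsHomogeneous (j - 1) := aux_pderiv_homog (hFj j) i
          rw [hEx, aux_eval_smul hpd, ← mul_assoc, ← pow_succ',
            Nat.sub_add_cancel hj1]
    rw [pgrad, show (fun i => eval ((EuclideanSpace.equiv (Fin n) ℝ) u)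
      (pderiv i (homogeneousComponent d f))) = (0 : Fin n → ℝ) from funext hcomp, map_zero]
  · -- f_{d-1}(u) = 0
    have hinner : Tendsto (fun k => (inner ℝ (x k) (pgrad f (x k)) : ℝ)) atTop (𝓝 0) :=
      squeeze_zero_norm (fun k => by
        calc ‖(inner ℝ (x k) (pgrad f (x k)) : ℝ)‖ ≤ ‖x k‖ * ‖pgrad f (x k)‖ :=
          norm_inner_le_norm _ _) hmal
    have hkey := aux_key (m := d - 1) (by omega) hnorm (L := (d : ℝ) * c - 0)
      (S := fun k => (d : ℝ) * pevalE f (x k) - (inner ℝ (x k) (pgrad f (x k)) : ℝ))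
      (a := fun j k => ((d : ℝ) - j) * eval (E (v k)) (F j))
      (α := fun j => ((d : ℝ) - j) * eval (E u) (F j))
      ((hval.const_mul _).sub hinner)
      (fun j _ => (hcont (F j)).const_mul _) ?_
    · have hc1 : ((d : ℝ) - ((d - 1 : ℕ) : ℝ)) = 1 := by
        rw [Nat.cast_sub (by omega)]; ring
      have hkey2 : ((d : ℝ) - ((d - 1 : ℕ) : ℝ)) * eval (E u) (F (d - 1)) = 0 := hkey
      rw [hc1, one_mul] at hkey2
      show eval (E u) (F (d - 1)) = 0
      exact hkey2
    · filter_upwards [hxk, ht0] with k hk hk0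
      have hEx : E (x k) = ‖x k‖ • E (v k) := by
        conv_lhs => rw [hk, map_smul]
      have hIP : (inner ℝ (x k) (pgrad f (x k)) : ℝ)
          = ∑ i, (E (x k)) i * eval (E (x k)) (pderiv i f) := by
        simp only [PiLp.inner_apply, RCLike.inner_apply, starRingEnd_apply, star_trivial]
        exact Finset.sum_congr rfl fun i _ => mul_comm _ _
      have hIP2 : (inner ℝ (x k) (pgrad f (x k)) : ℝ)
          = ∑ j ∈ Finset.range (d + 1), (j : ℝ) * eval (E (x k)) (F j) := by
        rw [hIP]
        conv_lhs => rw [hfd]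
        simp only [map_sum, Finset.mul_sum]
        rw [Finset.sum_comm]
        exact Finset.sum_congr rfl fun j _ => aux_euler (hFj j) _
      have hEV : pevalE f (x k) = ∑ j ∈ Finset.range (d + 1), eval (E (x k)) (F j) := by
        rw [pevalE]
        conv_lhs => rw [hfd]
        rw [map_sum]
      have hscale : ∀ j, eval (E (x k)) (F j) = ‖x k‖ ^ j * eval (E (v k)) (F j) := by
        intro j
        rw [hEx, aux_eval_smul (hFj j)]
      have hstep : (d : ℝ) * pevalE f (x k) - (inner ℝ (x k) (pgrad f (x k)) : ℝ)
          = ∑ j ∈ Finset.range (d + 1),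
              ‖x k‖ ^ j * (((d : ℝ) - j) * eval (E (v k)) (F j)) := by
        rw [hIP2, hEV, Finset.mul_sum, ← Finset.sum_sub_distrib]
        refine Finset.sum_congr rfl fun j _ => ?_
        rw [hscale j]; ring
      rw [hstep, show d - 1 + 1 = d from by omega, Finset.sum_range_succ]
      simp
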